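/- Let (G,w) be a weighted graph and p > 0. The weight w extends to a pseudosemimetric d on V(G) satisfying the power triangle inequality d(x,y) ≤ (d(x,z)^p + d(z,y)^p)^{1/p} and agreeing with w on the edges of G, if and only if for every cycle C ⊆ G and every edge e ∈ E(C), w(e)^p ≤ ∑_{ẽ ∈ E(C), ẽ ≠ e} w(ẽ)^p. -/

import Mathlib

open scoped NNReal ENNReal
open SimpleGraph

noncomputable section
namespace Stmt13Aux

variable {V : Type*} (G : SimpleGraph V) (w : Sym2 V → ℝ≥0) (p : ℝ)

/-- cost of a walk: sum of `w e ^ p` over edges -/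
def cost {x y : V} (W : G.Walk x y) : ℝ≥0 := (W.edges.map fun e => w e ^ p).sum

lemma cost_append {x y z : V} (W1 : G.Walk x y) (W2 : G.Walk y z) :
    cost G w p (W1.append W2) = cost G w p W1 + cost G w p W2 := by
  simp [cost, Walk.edges_append]

lemma cost_reverse {x y : V} (W : G.Walk x y) : cost G w p W.reverse = cost G w p W := by
  simp [cost, Walk.edges_reverse, List.sum_reverse]

lemma cost_nil {x : V} : cost G w p (Walk.nil : G.Walk x x) = 0 := by simp [cost]

/-- walk pseudodistance with values in ℝ≥0∞ -/
def D (x y : V) : ℝ≥0∞ := ⨅ W : G.Walk x y, (cost G w p W : ℝ≥0∞)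

lemma D_le_cost {x y : V} (W : G.Walk x y) : D G w p x y ≤ cost G w p W := iInf_le _ W

lemma D_self (x : V) : D G w p x x = 0 :=
  le_antisymm ((D_le_cost G w p Walk.nil).trans (by simp [cost_nil])) zero_le

lemma D_symm (x y : V) : D G w p x y = D G w p y x := by
  have key : ∀ a b : V, D G w p a b ≤ D G w p b a := by
    intro a b
    refine le_iInf fun W => ?_
    exact (D_le_cost G w p W.reverse).trans (by rw [cost_reverse])
  exact le_antisymm (key x y) (key y x)

lemma D_triangle (x y z : V) : D G w p x y ≤ D G w p x z + D G w p z y := by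
  rw [D, D, ENNReal.iInf_add]
  refine le_iInf fun W1 => ?_
  rw [D, ENNReal.add_iInf]
  refine le_iInf fun W2 => ?_
  calc D G w p x y ≤ cost G w p (W1.append W2) := D_le_cost G w p _
    _ = _ := by rw [cost_append]; push_cast; ring

lemma D_ne_top_of_reachable {x y : V} (h : G.Reachable x y) : D G w p x y ≠ ⊤ := by
  obtain ⟨W⟩ := h
  exact ((D_le_cost G w p W).trans_lt ENNReal.coe_lt_top).ne

lemma reachable_of_D_ne_top {x y : V} (h : D G w p x y ≠ ⊤) : G.Reachable x y := by
  by_contra hr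
  have : IsEmpty (G.Walk x y) := ⟨fun W => hr ⟨W⟩⟩
  exact h (by simp [D, iInf_of_empty])

/-- basepoint of a connected component -/
def bp0 (c : G.ConnectedComponent) : V := (Quot.exists_rep c).choose

/-- basepoint of the connected component of a vertex -/
def bp (x : V) : V := bp0 G (G.connectedComponentMk x)

lemma bp_reachable (x : V) : G.Reachable x (bp G x) := by
  have h := (Quot.exists_rep (G.connectedComponentMk x)).choose_spec
  exact (ConnectedComponent.eq.mp h).symm

lemma bp_eq_of_reachable {x y : V} (h : G.Reachable x y) : bp G x = bp G y :=
  congrArg (bp0 G) (ConnectedComponent.sound h)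

/-- distance of a vertex to its component basepoint -/
def E (x : V) : ℝ≥0∞ := D G w p x (bp G x)

lemma E_ne_top (x : V) : E G w p x ≠ ⊤ := D_ne_top_of_reachable G w p (bp_reachable G x)

/-- the glued pseudodistance, finite everywhere -/
def σ (x y : V) : ℝ≥0∞ := min (D G w p x y) (E G w p x + 1 + E G w p y)

lemma σ_ne_top (x y : V) : σ G w p x y ≠ ⊤ := by
  refine ne_top_of_le_ne_top ?_ (min_le_right _ _)
  simp [ENNReal.add_ne_top, E_ne_top]

lemma σ_self (x : V) : σ G w p x x = 0 :=
  le_antisymm ((min_le_left _ _).trans_eq (D_self G w p x)) zero_le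

lemma σ_symm (x y : V) : σ G w p x y = σ G w p y x := by
  rw [σ, σ, D_symm]
  congr 1
  ring

lemma E_le_D_add {x z : V} (h : D G w p x z ≠ ⊤) :
    E G w p x ≤ D G w p x z + E G w p z := by
  have hr : G.Reachable x z := reachable_of_D_ne_top G w p h
  have hbp : bp G x = bp G z := bp_eq_of_reachable G hr
  calc E G w p x = D G w p x (bp G z) := by rw [E, hbp]
    _ ≤ D G w p x z + D G w p z (bp G z) := D_triangle G w p _ _ _
    _ = D G w p x z + E G w p z := rfl

lemma σ_triangle (x y z : V) : σ G w p x y ≤ σ G w p x z + σ G w p z y := by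
  rcases min_cases (D G w p x z) (E G w p x + 1 + E G w p z) with ⟨h1, _⟩ | ⟨h1, _⟩ <;>
    rcases min_cases (D G w p z y) (E G w p z + 1 + E G w p y) with ⟨h2, _⟩ | ⟨h2, _⟩ <;>
      rw [σ, σ, σ, h1, h2]
  · exact (min_le_left _ _).trans (D_triangle G w p x y z)
  · rcases eq_or_ne (D G w p x z) ⊤ with ht | ht
    · simp [ht]
    · refine (min_le_right _ _).trans ?_
      have hEx : E G w p x ≤ D G w p x z + E G w p z := E_le_D_add G w p ht
      calc E G w p x + 1 + E G w p y ≤ (D G w p x z + E G w p z) + 1 + E G w p y := by gcongr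
        _ = D G w p x z + (E G w p z + 1 + E G w p y) := by ring
  · rcases eq_or_ne (D G w p z y) ⊤ with ht | ht
    · simp [ht]
    · refine (min_le_right _ _).trans ?_
      have hEy : E G w p y ≤ D G w p y z + E G w p z := by
        refine E_le_D_add G w p ?_
        rwa [D_symm]
      calc E G w p x + 1 + E G w p y ≤ E G w p x + 1 + (D G w p y z + E G w p z) := by gcongr
        _ = (E G w p x + 1 + E G w p z) + D G w p z y := by rw [D_symm G w p y z]; ring
  · refine (min_le_right _ _).trans ?_
    rw [show (E G w p x + 1 + E G w p z) + (E G w p z + 1 + E G w p y)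
        = (E G w p x + 1 + E G w p y) + (E G w p z + E G w p z + 1) by ring]
    exact le_self_add

/-- the candidate pseudosemimetric -/
def d (x y : V) : ℝ≥0 := (σ G w p x y).toNNReal ^ (1 / p)

lemma cost_bypass_le [DecidableEq V] {x y : V} (W : G.Walk x y) :
    cost G w p W.bypass ≤ cost G w p W := by
  have hnd : W.bypass.edges.Nodup := W.bypass_isPath.isTrail.edges_nodup
  obtain ⟨l, hperm, hsub⟩ := hnd.subperm W.edges_bypass_subset
  calc cost G w p W.bypass = (l.map fun e => w e ^ p).sum :=
        ((hperm.map fun e => w e ^ p).sum_eq).symm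
    _ ≤ (W.edges.map fun e => w e ^ p).sum :=
        List.Sublist.sum_le_sum (List.Sublist.map _ hsub) (fun a _ => zero_le)
    _ = cost G w p W := rfl

lemma D_edge [DecidableEq V]
    (hyp : ∀ (a b : V) (h : G.Adj a b) (q : G.Walk b a),
        (SimpleGraph.Walk.cons h q).IsCycle →
        w s(a, b) ^ p ≤ (q.edges.map fun e => w e ^ p).sum)
    {u v : V} (h : G.Adj u v) :
    D G w p u v = (w s(u, v) ^ p : ℝ≥0) := by
  apply le_antisymm
  · refine (D_le_cost G w p (Walk.cons h Walk.nil)).trans ?_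
    simp [cost]
  · refine le_iInf fun W => ?_
    rw [ENNReal.coe_le_coe]
    refine le_trans ?_ (cost_bypass_le G w p W)
    by_cases hm : s(u, v) ∈ W.bypass.edges
    · exact List.single_le_sum (fun a _ => zero_le) _
        (List.mem_map_of_mem (f := fun e => w e ^ p) hm)
    · have hc : (Walk.cons h.symm W.bypass).IsCycle := by
        rw [Walk.cons_isCycle_iff]
        exact ⟨W.bypass_isPath, by rwa [Sym2.eq_swap]⟩
      have := hyp v u h.symm W.bypass hc
      rwa [Sym2.eq_swap] at this

lemma σ_eq_D_of_reachable {u v : V} (h : G.Reachable u v) :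
    σ G w p u v = D G w p u v := by
  refine min_eq_left ?_
  have hbp : bp G u = bp G v := bp_eq_of_reachable G h
  calc D G w p u v ≤ D G w p u (bp G u) + D G w p (bp G u) v := D_triangle G w p _ _ _
    _ = E G w p u + E G w p v := by rw [E, E, hbp, D_symm G w p (bp G v) v]
    _ ≤ E G w p u + 1 + E G w p v := by
        rw [add_assoc]
        exact add_le_add_right (le_add_self) _

lemma d_rpow_p (hp : 0 < p) (x y : V) : d G w p x y ^ p = (σ G w p x y).toNNReal := by
  rw [d, ← NNReal.rpow_mul, one_div_mul_cancel hp.ne', NNReal.rpow_one]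

end Stmt13Aux
end

open Stmt13Aux in
/-- for `p > 0`, `w` extends to a pseudosemimetric satisfying the power
triangle inequality `d(x,y) ≤ (d(x,z)^p + d(z,y)^p)^(1/p)` iff for every cycle and every
edge `e` of it, `w(e)^p ≤ ∑_{ẽ ∈ C∖e} w(ẽ)^p`. -/
theorem stmt_13 {V : Type*} (G : SimpleGraph V) (w : Sym2 V → ℝ≥0)
    (p : ℝ) (hp : 0 < p) :
    (∃ d : V → V → ℝ≥0,
        (∀ x y, d x y = d y x) ∧ (∀ x, d x x = 0) ∧
        (∀ x y z, d x y ≤ (d x z ^ p + d z y ^ p) ^ (1 / p)) ∧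
        ∀ u v, G.Adj u v → d u v = w s(u, v)) ↔
    (∀ (a b : V) (h : G.Adj a b) (q : G.Walk b a),
        (SimpleGraph.Walk.cons h q).IsCycle →
        w s(a, b) ^ p ≤ (q.edges.map fun e => w e ^ p).sum) := by
  classical
  constructor
  · rintro ⟨d, hs, h0, ht, he⟩ a b h q _
    have key : ∀ {x y : V} (W : G.Walk x y),
        d x y ^ p ≤ (W.edges.map fun e => w e ^ p).sum := by
      intro x y W
      induction W with
      | nil => simp [h0, NNReal.zero_rpow hp.ne']
      | @cons u v z h' W ih =>
        rw [Walk.edges_cons, List.map_cons, List.sum_cons]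
        have h2 := ht u z v
        calc d u z ^ p ≤ ((d u v ^ p + d v z ^ p) ^ (1 / p)) ^ p :=
              NNReal.rpow_le_rpow h2 hp.le
          _ = d u v ^ p + d v z ^ p := by
              rw [← NNReal.rpow_mul, one_div_mul_cancel hp.ne', NNReal.rpow_one]
          _ ≤ _ := by rw [he u v h']; exact add_le_add_right ih _
    calc w s(a, b) ^ p = d b a ^ p := by rw [← he a b h, hs a b]
      _ ≤ _ := key q
  · intro hyp
    refine ⟨Stmt13Aux.d G w p, fun x y => by rw [d, d, σ_symm], fun x => ?_, ?_, ?_⟩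
    · rw [d, σ_self]
      simp only [ENNReal.toNNReal_zero]
      exact NNReal.zero_rpow (one_div_ne_zero hp.ne')
    · intro x y z
      have h1 : (σ G w p x y).toNNReal ≤ (σ G w p x z).toNNReal + (σ G w p z y).toNNReal := by
        rw [← ENNReal.toNNReal_add (σ_ne_top G w p x z) (σ_ne_top G w p z y)]
        exact ENNReal.toNNReal_mono
          (by simp [ENNReal.add_ne_top, σ_ne_top]) (σ_triangle G w p x y z)
      rw [show Stmt13Aux.d G w p x y = (σ G w p x y).toNNReal ^ (1/p) from rfl,
        d_rpow_p G w p hp, d_rpow_p G w p hp]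
      exact NNReal.rpow_le_rpow h1 (by positivity)
    · intro u v h
      rw [d, σ_eq_D_of_reachable G w p h.reachable, D_edge G w p hyp h,
        ENNReal.toNNReal_coe, ← NNReal.rpow_mul, mul_one_div_cancel hp.ne',
        NNReal.rpow_one]
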